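/- arXiv:2601.02664 — 8 statements merged into one kernel-verified Lean document; each statement's English description precedes it below -/
import Mathlib

section
/- Let p be an odd prime, q a power of p, and k ≥ 0. Then the Fibonacci polynomial F_{p^k}(T), reduced modulo p, equals (T^2 + 4)^{(p^k - 1)/2} in F_q[T]. -/
open Polynomial

noncomputable def fibPoly (R : Type*) [CommRing R] : ℕ → Polynomial R
  | 0 => 0
  | 1 => 1
  | n + 2 => Polynomial.X * fibPoly R (n + 1) + fibPoly R n

section aux

variable (F : Type*) [Field F]

/-- The polynomial `Y^2 - X·Y - 1` over `F[X]`, whose roots are the "golden ratio" elements. -/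
noncomputable def fibAuxPoly : Polynomial (Polynomial F) :=
  X ^ 2 - C Polynomial.X * X - 1

lemma fibAuxPoly_degree : (fibAuxPoly F).degree = 2 := by
  unfold fibAuxPoly
  compute_degree!

/-- The extension ring `F[X][α]` where `α² = X·α + 1`. -/
noncomputable abbrev FibExt := AdjoinRoot (fibAuxPoly F)

noncomputable def fibα : FibExt F := AdjoinRoot.root (fibAuxPoly F)

noncomputable def fibOf : Polynomial F →+* FibExt F := AdjoinRoot.of (fibAuxPoly F)

noncomputable def fibβ : FibExt F := fibOf F Polynomial.X - fibα F

lemma fibα_sq : (fibα F) ^ 2 = fibOf F Polynomial.X * fibα F + 1 := by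
  have h := AdjoinRoot.eval₂_root (fibAuxPoly F)
  unfold fibAuxPoly at h
  simp only [eval₂_sub, eval₂_pow, eval₂_mul, eval₂_X, eval₂_C, eval₂_one] at h
  unfold fibα fibOf fibAuxPoly
  exact sub_eq_zero.mp ((sub_sub _ _ _).symm.trans h)

lemma fibβ_sq : (fibβ F) ^ 2 = fibOf F Polynomial.X * fibβ F + 1 := by
  unfold fibβ
  linear_combination fibα_sq F

lemma fib_key : ∀ n : ℕ,
    fibOf F (fibPoly F n) * (fibα F - fibβ F) = (fibα F) ^ n - (fibβ F) ^ n
  | 0 => by simp [fibPoly]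
  | 1 => by simp [fibPoly]
  | (n + 2) => by
    have h1 := fib_key (n + 1)
    have h2 := fib_key n
    have hα := fibα_sq F
    have hβ := fibβ_sq F
    simp only [fibPoly, map_add, map_mul]
    linear_combination fibOf F Polynomial.X * h1 + h2 - (fibα F) ^ n * hα +
      (fibβ F) ^ n * hβ

lemma fib_sq_diff : (fibα F - fibβ F) ^ 2 = fibOf F (Polynomial.X ^ 2 + Polynomial.C 4) := by
  have hα := fibα_sq F
  unfold fibβ
  rw [map_add, map_pow]
  have h4 : fibOf F (Polynomial.C (4 : F)) = 4 := by
    rw [map_ofNat (Polynomial.C : F →+* Polynomial F) 4, map_ofNat]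
  rw [h4]
  linear_combination (4 : FibExt F) * hα

lemma fibOf_injective : Function.Injective (fibOf F) := by
  apply AdjoinRoot.of.injective_of_degree_ne_zero
  rw [fibAuxPoly_degree]
  decide

end aux

theorem fib_poly_prime_pow (p : ℕ) [Fact p.Prime] (hp : Odd p)
    (F : Type*) [Field F] [Fintype F] [CharP F p] (k : ℕ) :
    fibPoly F (p ^ k) = (X ^ 2 + C 4) ^ ((p ^ k - 1) / 2) := by
  have hinj := fibOf_injective F
  haveI : CharP (FibExt F) p :=
    charP_of_injective_ringHom
      (show Function.Injective ((fibOf F).comp (Polynomial.C : F →+* Polynomial F)) from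
        hinj.comp Polynomial.C_injective) p
  obtain ⟨t, ht⟩ := hp.pow (n := k)
  have hm : (p ^ k + 1) / 2 = t + 1 := by omega
  have hm' : (p ^ k - 1) / 2 = t := by omega
  -- main computation in the extension
  have hmain : fibOf F (fibPoly F (p ^ k)) * (fibα F - fibβ F) =
      (fibα F - fibβ F) ^ (p ^ k) := by
    rw [fib_key, sub_pow_char_pow]
  have hmul : fibOf F (fibPoly F (p ^ k) * (Polynomial.X ^ 2 + Polynomial.C 4)) =
      fibOf F ((Polynomial.X ^ 2 + Polynomial.C 4) ^ (t + 1)) := by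
    rw [map_mul, ← fib_sq_diff, map_pow, ← fib_sq_diff, ← pow_mul, sq, ← mul_assoc, hmain,
      ← pow_succ]
    congr 1
    omega
  have heq := hinj hmul
  have hne : (Polynomial.X ^ 2 + Polynomial.C (4 : F)) ≠ 0 := by
    intro h
    have := congrArg (fun q => Polynomial.coeff q 2) h
    simp at this
  rw [hm']
  refine mul_right_cancel₀ hne ?_
  calc fibPoly F (p ^ k) * (Polynomial.X ^ 2 + Polynomial.C 4)
      = (Polynomial.X ^ 2 + Polynomial.C 4) ^ (t + 1) := heq
    _ = (Polynomial.X ^ 2 + Polynomial.C 4) ^ t * (Polynomial.X ^ 2 + Polynomial.C 4) :=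
        pow_succ _ _
end

section
/- Let p be a prime, q a power of p, and write n = p^k · m with gcd(m, p) = 1. Then in F_q[T], the Fibonacci polynomial satisfies F_n(T) = F_{p^k}(T) · F_m(T)^{p^k}. -/
open Polynomial

section Aux

variable (R : Type*) [CommRing R]

/-- The Fibonacci matrix. -/
noncomputable def fibMat : Matrix (Fin 2) (Fin 2) (Polynomial R) :=
  !![Polynomial.X, 1; 1, 0]

lemma fibMat_sq : (fibMat R) ^ 2 =
    (Polynomial.X : Polynomial R) • fibMat R + 1 := by
  rw [pow_two, fibMat]
  ext i j
  fin_cases i <;> fin_cases j <;>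
    simp [Matrix.mul_apply, Fin.sum_univ_two, Matrix.one_apply]

lemma fibMat_pow (n : ℕ) :
    (fibMat R) ^ (n + 1) = fibPoly R (n + 1) • fibMat R + fibPoly R n • 1 := by
  induction n with
  | zero => simp [fibPoly]
  | succ n ih =>
    rw [pow_succ, ih, add_mul, Matrix.smul_mul, Matrix.smul_mul, one_mul, ← pow_two,
      fibMat_sq, smul_add, smul_smul]
    show _ = fibPoly R (n + 2) • fibMat R + fibPoly R (n + 1) • 1
    rw [show fibPoly R (n + 2) = Polynomial.X * fibPoly R (n + 1) + fibPoly R n from rfl]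
    module

lemma smul_one_eq_entry (a b : Polynomial R) :
    (a • fibMat R + b • (1 : Matrix (Fin 2) (Fin 2) (Polynomial R))) 0 1 = a := by
  simp [fibMat, Matrix.one_apply]

end Aux

lemma fibPoly_mul_p (p : ℕ) [Fact p.Prime]
    (F : Type*) [Field F] [CharP F p] (n : ℕ) :
    fibPoly F (p * n) = fibPoly F p * (fibPoly F n) ^ p := by
  rcases n with _ | n
  · simp [fibPoly, Fact.out (p := p.Prime) |>.pos.ne']
  have hp : p - 1 + 1 = p := Nat.succ_pred_eq_of_pos (Fact.out (p := p.Prime)).pos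
  have hpn : p * (n + 1) - 1 + 1 = p * (n + 1) :=
    Nat.succ_pred_eq_of_pos (Nat.mul_pos (Fact.out (p := p.Prime)).pos n.succ_pos)
  have hc : Commute (fibPoly F (n + 1) • fibMat F)
      (fibPoly F n • (1 : Matrix (Fin 2) (Fin 2) (Polynomial F))) := by
    unfold Commute SemiconjBy
    simp [Matrix.mul_smul, Matrix.smul_mul, smul_smul, mul_comm]
  have key : (fibMat F) ^ (p * (n + 1)) =
      ((fibPoly F (n + 1)) ^ p * fibPoly F p) • fibMat F +
      ((fibPoly F (n + 1)) ^ p * fibPoly F (p - 1) + (fibPoly F n) ^ p) • 1 := by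
    rw [pow_mul', fibMat_pow F n, add_pow_char_of_commute _ hc,
      _root_.smul_pow, _root_.smul_pow, one_pow, ← hp, fibMat_pow F (p - 1), hp, smul_add,
      smul_smul, smul_smul, add_assoc, ← add_smul]
  have key2 : fibPoly F (p * (n + 1) - 1 + 1) • fibMat F + fibPoly F (p * (n + 1) - 1) • 1 =
      ((fibPoly F (n + 1)) ^ p * fibPoly F p) • fibMat F +
      ((fibPoly F (n + 1)) ^ p * fibPoly F (p - 1) + (fibPoly F n) ^ p) • 1 := by
    rw [← fibMat_pow, hpn]; exact key
  have h01 := congrArg (fun M => M 0 1) key2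
  simp only [smul_one_eq_entry] at h01
  rw [← hpn, h01]
  ring

theorem fib_poly_factor (p : ℕ) [Fact p.Prime]
    (F : Type*) [Field F] [Fintype F] [CharP F p] (k m : ℕ) (hm : Nat.Coprime m p) :
    fibPoly F (p ^ k * m) = fibPoly F (p ^ k) * (fibPoly F m) ^ (p ^ k) := by
  induction k with
  | zero => simp [fibPoly]
  | succ k ih =>
    have h1 : p ^ (k + 1) * m = p * (p ^ k * m) := by ring
    have h3 : fibPoly F (p ^ (k + 1)) = fibPoly F p * fibPoly F (p ^ k) ^ p := by
      rw [pow_succ']; exact fibPoly_mul_p p F (p ^ k)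
    rw [h1, fibPoly_mul_p, ih, mul_pow, h3, ← pow_mul, ← pow_succ]
    ring
end

section
/- Let p be an odd prime, q a power of p, and m a positive integer with p ∤ m. Then the Fibonacci polynomial F_m(T) is square-free in F_q[T]. -/
open Polynomial

lemma fibPoly_zero (R : Type*) [CommRing R] : fibPoly R 0 = 0 := rfl
lemma fibPoly_one (R : Type*) [CommRing R] : fibPoly R 1 = 1 := rfl
lemma fibPoly_add_two (R : Type*) [CommRing R] (n : ℕ) :
    fibPoly R (n + 2) = X * fibPoly R (n + 1) + fibPoly R n := rfl

lemma fib_cassini (R : Type*) [CommRing R] (n : ℕ) :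
    fibPoly R (n+2) * fibPoly R n - fibPoly R (n+1)^2 = (-1 : Polynomial R)^(n+1) := by
  induction n with
  | zero => simp [fibPoly_add_two, fibPoly_zero, fibPoly_one]
  | succ k ih =>
    rw [fibPoly_add_two R (k+1), fibPoly_add_two R k]
    rw [fibPoly_add_two R k] at ih
    linear_combination (-1 : Polynomial R) * ih

lemma deriv_fib_aux (R : Type*) [CommRing R] (n : ℕ) :
    ((X^2 + 4) * derivative (fibPoly R (n+1)) =
      (n : Polynomial R) * X * fibPoly R (n+1) + 2 * ((n : Polynomial R) + 1) * fibPoly R n)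
    ∧ ((X^2 + 4) * derivative (fibPoly R (n+2)) =
      ((n : Polynomial R) + 1) * X * fibPoly R (n+2) + 2 * ((n : Polynomial R) + 2) * fibPoly R (n+1)) := by
  induction n with
  | zero =>
    constructor
    · simp [fibPoly_one, fibPoly_zero]
    · rw [fibPoly_add_two]
      simp [fibPoly_one, fibPoly_zero]
      ring
  | succ k ih =>
    obtain ⟨ih1, ih2⟩ := ih
    have hrec : fibPoly R (k+1+1) = X * fibPoly R (k+1) + fibPoly R k := fibPoly_add_two R k
    have hrec2 : fibPoly R (k+2) = X * fibPoly R (k+1) + fibPoly R k := fibPoly_add_two R k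
    refine ⟨by push_cast; linear_combination ih2 + (4 * ((k:Polynomial R) + 1)) * hrec2
      - (4 * ((k:Polynomial R) + 1)) * hrec, ?_⟩
    rw [fibPoly_add_two R (k+1)]
    rw [derivative_add, derivative_mul, derivative_X]
    push_cast
    linear_combination X * ih2 + ih1 - (2 * ((k:Polynomial R) + 1)) * hrec

lemma deriv_fib (R : Type*) [CommRing R] (n : ℕ) :
    (X^2 + 4) * derivative (fibPoly R (n+1)) =
      (n : Polynomial R) * X * fibPoly R (n+1) + 2 * ((n : Polynomial R) + 1) * fibPoly R n :=
  (deriv_fib_aux R n).1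

theorem fib_poly_squarefree (p : ℕ) [Fact p.Prime] (hp : Odd p)
    (F : Type*) [Field F] [Fintype F] [CharP F p] (m : ℕ) (hm : 0 < m) (hpm : ¬ p ∣ m) :
    Squarefree (fibPoly F m) := by
  obtain ⟨k, rfl⟩ : ∃ k, m = k + 1 := ⟨m - 1, by omega⟩
  set f := fibPoly F (k+1) with hf
  set g := fibPoly F k with hg
  have hder := deriv_fib F k
  have hcas := fib_cassini F k
  rw [fibPoly_add_two F k] at hcas
  rw [← hf, ← hg] at hder hcas
  -- the scalar
  set v : F := 4 * ((k : F) + 1) * (-1 : F)^(k+1) with hvdef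
  have hp2 : (2 : F) ≠ 0 := by
    intro h
    have := (CharP.cast_eq_zero_iff F p 2).mp (by exact_mod_cast h)
    have hpeq := (Nat.prime_dvd_prime_iff_eq (Fact.out : p.Prime) Nat.prime_two).mp this
    rw [hpeq] at hp
    exact (by norm_num : ¬ Odd 2) hp
  have hk1 : ((k : F) + 1) ≠ 0 := by
    intro h
    have : ((k + 1 : ℕ) : F) = 0 := by push_cast; exact h
    exact hpm ((CharP.cast_eq_zero_iff F p (k+1)).mp this)
  have hv : v ≠ 0 := by
    apply mul_ne_zero (mul_ne_zero ?_ hk1) (pow_ne_zero _ (by simpa using neg_ne_zero.mpr one_ne_zero))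
    · have : (4 : F) = 2 * 2 := by norm_num
      rw [this]; exact mul_ne_zero hp2 hp2
  have hCv : C v = 4 * ((k : Polynomial F) + 1) * (-1 : Polynomial F)^(k+1) := by
    rw [hvdef]
    push_cast
    simp [map_mul, map_add, map_pow, map_ofNat]
  set L : Polynomial F := X * f + 2 * g with hL
  set D : Polynomial F := X^2 + 4 with hD
  have key : (X * L - ((k : Polynomial F) + 1) * D * f) * f + (D * L) * derivative f = C v := by
    rw [hL, hD, hCv]
    linear_combination (X * f + 2 * g) * hder + (4 * ((k : Polynomial F) + 1)) * hcas
  have hsep : f.Separable := by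
    refine ⟨C v⁻¹ * (X * L - ((k : Polynomial F) + 1) * D * f), C v⁻¹ * (D * L), ?_⟩
    have hvv : C (v⁻¹) * C v = (1 : Polynomial F) := by
      rw [← C_mul, inv_mul_cancel₀ hv, C_1]
    linear_combination C v⁻¹ * key + hvv
  exact hsep.squarefree
end

section
/- Let p be an odd prime and n ≥ 1. Over a field of characteristic p, the Fibonacci polynomial F_n(T) reduced modulo T^2 + 4 equals (-1)^{(n-1)/2}·n if n is odd, and (-1)^{(n+2)/2}·(n/2)·T if n is even. -/
open Polynomial

noncomputable def gPoly (K : Type*) [Field K] (n : ℕ) : Polynomial K :=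
  if Odd n then C ((-1) ^ ((n - 1) / 2) * (n : K))
  else C ((-1) ^ ((n + 2) / 2) * (n : K) / 2) * X

lemma gPoly_even (K : Type*) [Field K] (h2 : (2:K) ≠ 0) (m : ℕ) :
    gPoly K (2*m) = C ((-1)^(m+1) * (m:K)) * X := by
  have hno : ¬ Odd (2*m) := by simp [Nat.not_odd_iff_even]
  have h1 : (2*m+2)/2 = m+1 := by omega
  have hcoef : ((-1:K)^((2*m+2)/2) * ((2*m:ℕ):K)/2) = (-1)^(m+1)*(m:K) := by
    rw [h1]; push_cast; field_simp
  rw [gPoly, if_neg hno, hcoef]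

lemma gPoly_odd (K : Type*) [Field K] (m : ℕ) :
    gPoly K (2*m+1) = C ((-1)^m * ((2*m+1 : ℕ):K)) := by
  have h1 : (2*m+1-1)/2 = m := by omega
  rw [gPoly, if_pos ⟨m, by ring⟩, h1]

lemma gPoly_rec (K : Type*) [Field K] (h2 : (2:K) ≠ 0) (n : ℕ) :
    ∃ c : Polynomial K,
      X * gPoly K (n+1) + gPoly K n - gPoly K (n+2) = (X^2 + C 4) * c := by
  rcases Nat.even_or_odd n with ⟨m, rfl⟩ | ⟨m, rfl⟩
  · -- n = m + m
    refine ⟨0, ?_⟩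
    rw [show m + m = 2 * m from by ring]
    rw [show 2*m+2 = 2*(m+1) from by ring, gPoly_odd, gPoly_even K h2, gPoly_even K h2]
    have hc : ((-1:K)^m * ((2*m+1:ℕ):K)) + ((-1:K)^(m+1) * (m:K))
        - ((-1:K)^(m+1+1) * ((m+1:ℕ):K)) = 0 := by push_cast; ring
    have h : C ((-1:K)^m * ((2*m+1:ℕ):K)) + C ((-1:K)^(m+1) * (m:K))
        - C ((-1:K)^(m+1+1) * ((m+1:ℕ):K)) = 0 := by
      rw [← C_add, ← C_sub, hc, C_0]
    linear_combination X * h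
  · -- n = 2*m+1
    refine ⟨C ((-1:K)^(m+1+1) * ((m+1:ℕ):K)), ?_⟩
    have e1 : 2*m+1+1 = 2*(m+1) := by ring
    have e2 : 2*m+1+2 = 2*(m+1)+1 := by ring
    rw [e1, e2, gPoly_even K h2, gPoly_odd, gPoly_odd]
    have hc : ((-1:K)^m * ((2*m+1:ℕ):K)) - ((-1:K)^(m+1) * ((2*(m+1)+1:ℕ):K))
        - 4 * ((-1:K)^(m+1+1) * ((m+1:ℕ):K)) = 0 := by push_cast; ring
    have h : C ((-1:K)^m * ((2*m+1:ℕ):K)) - C ((-1:K)^(m+1) * ((2*(m+1)+1:ℕ):K))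
        - C 4 * C ((-1:K)^(m+1+1) * ((m+1:ℕ):K)) = 0 := by
      rw [← C_mul, ← C_sub, ← C_sub, hc, C_0]
    linear_combination h

theorem fib_poly_mod_X_sq_add_four (p : ℕ) [Fact p.Prime] (hp : Odd p)
    (K : Type*) [Field K] [CharP K p] (n : ℕ) (hn : 1 ≤ n) :
    (X ^ 2 + C 4 : Polynomial K) ∣
      (fibPoly K n -
        (if Odd n then C ((-1) ^ ((n - 1) / 2) * (n : K))
         else C ((-1) ^ ((n + 2) / 2) * (n : K) / 2) * X)) := by
  have h2 : (2:K) ≠ 0 := by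
    intro h
    have hdvd : p ∣ 2 := (CharP.cast_eq_zero_iff K p 2).mp (by exact_mod_cast h)
    have hp2 : p = 2 := (Nat.prime_dvd_prime_iff_eq Fact.out Nat.prime_two).mp hdvd
    rw [hp2] at hp
    exact (by decide : ¬ Odd 2) hp
  show (X ^ 2 + C 4 : Polynomial K) ∣ fibPoly K n - gPoly K n
  clear hn
  suffices h : ∀ n, ((X ^ 2 + C 4 : Polynomial K) ∣ fibPoly K n - gPoly K n) ∧
      ((X ^ 2 + C 4 : Polynomial K) ∣ fibPoly K (n+1) - gPoly K (n+1)) from (h n).1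
  intro n
  induction n with
  | zero =>
    constructor
    · have : gPoly K 0 = 0 := by
        have := gPoly_even K h2 0
        simpa using this
      rw [this]
      simp [fibPoly]
    · have : gPoly K 1 = 1 := by
        have := gPoly_odd K 0
        simpa using this
      rw [this]
      simp [fibPoly]
  | succ n ih =>
    refine ⟨ih.2, ?_⟩
    obtain ⟨a, ha⟩ := ih.2
    obtain ⟨b, hb⟩ := ih.1
    obtain ⟨c, hc⟩ := gPoly_rec K h2 n
    refine ⟨X * a + b + c, ?_⟩
    have hf : fibPoly K (n+2) = X * fibPoly K (n+1) + fibPoly K n := rfl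
    rw [hf]
    linear_combination X * ha + hb + hc
end

section
/- Let p be a prime, q a power of p, and m a positive integer with p ∤ m. Then T^2 + 4 and the Fibonacci polynomial F_m(T) are coprime in F_q[T]. -/
open Polynomial

lemma fibPoly_key (R : Type*) [CommRing R] (n : ℕ) :
    ((X ^ 2 + C 4 : Polynomial R) ∣
        fibPoly R n ^ 2 - (-1) ^ (n + 1) * (n : Polynomial R) ^ 2) ∧
      ((X ^ 2 + C 4 : Polynomial R) ∣
        fibPoly R (n + 1) ^ 2 - (-1) ^ (n + 2) * ((n : Polynomial R) + 1) ^ 2) ∧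
      ((X ^ 2 + C 4 : Polynomial R) ∣
        2 * fibPoly R (n + 1) * fibPoly R n -
          (-1) ^ (n + 1) * (n : Polynomial R) * ((n : Polynomial R) + 1) * X) := by
  induction n with
  | zero => refine ⟨⟨0, ?_⟩, ⟨0, ?_⟩, ⟨0, ?_⟩⟩ <;> simp [fibPoly]
  | succ n ih =>
    obtain ⟨⟨b, hb⟩, ⟨a, ha⟩, ⟨c, hc⟩⟩ := ih
    have hrec : fibPoly R (n + 2) = X * fibPoly R (n + 1) + fibPoly R n := rfl
    refine ⟨⟨a, by push_cast; linear_combination ha⟩,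
      ⟨X ^ 2 * a + X * c + b - (-1) ^ (n + 1) * ((n : Polynomial R) + 1), ?_⟩,
      ⟨2 * X * a + c, ?_⟩⟩
    · push_cast
      have h4 : (C 4 : Polynomial R) = 4 := map_ofNat C 4
      linear_combination (fibPoly R (n + 2) + X * fibPoly R (n + 1) + fibPoly R n) * hrec +
        X ^ 2 * ha + X * hc + hb - ((n : Polynomial R) + 1) * (-1) ^ n * h4
    · push_cast
      linear_combination 2 * fibPoly R (n + 1) * hrec + 2 * X * ha + hc

theorem fib_poly_coprime_X_sq_add_four (p : ℕ) [Fact p.Prime]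
    (F : Type*) [Field F] [Fintype F] [CharP F p] (m : ℕ) (hm : 0 < m) (hpm : ¬ p ∣ m) :
    IsCoprime (X ^ 2 + C 4 : Polynomial F) (fibPoly F m) := by
  obtain ⟨g, hg⟩ := (fibPoly_key F m).1
  set c : F := (-1) ^ (m + 1) * (m : F) ^ 2 with hc_def
  have hmF : (m : F) ≠ 0 := by
    rw [Ne, CharP.cast_eq_zero_iff F p]; exact hpm
  have hc : c ≠ 0 := by
    simp [hc_def, pow_ne_zero, hmF]
  have hCc : (C c : Polynomial F) = (-1) ^ (m + 1) * (m : Polynomial F) ^ 2 := by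
    simp [hc_def, map_mul, map_pow, map_natCast]
  refine ⟨-C c⁻¹ * g, C c⁻¹ * fibPoly F m, ?_⟩
  have h1 : -C c⁻¹ * g * (X ^ 2 + C 4) + C c⁻¹ * fibPoly F m * fibPoly F m
      = C c⁻¹ * C c := by
    rw [hCc]; linear_combination (C c⁻¹ : Polynomial F) * hg
  rw [h1, ← C_mul, inv_mul_cancel₀ hc, C_1]
end

section
/- Let q be a power of 2 and n ≥ 1. Then the Fibonacci polynomial F_n(T) is a square in F_q[T] if and only if n is odd. -/
open Polynomial

lemma fibPoly_add (R : Type*) [CommRing R] (m n : ℕ) :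
    fibPoly R (m + n + 1) =
      fibPoly R (m + 1) * fibPoly R (n + 1) + fibPoly R m * fibPoly R n := by
  induction n using Nat.twoStepInduction generalizing m with
  | zero => simp [fibPoly]
  | one => show fibPoly R (m + 2) = _; simp [fibPoly]; ring
  | more n ih1 ih2 =>
      have h1 := ih1 m
      have h2 := ih2 m
      have : m + (n + 2) + 1 = (m + n + 1) + 2 := by ring
      rw [this, show fibPoly R ((m+n+1)+2) = Polynomial.X * fibPoly R (m+n+1+1) + fibPoly R (m+n+1) from rfl]
      have e1 : m + n + 1 + 1 = m + (n+1) + 1 := by ring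
      rw [e1, h2, h1]
      show _ = fibPoly R (m+1) * (Polynomial.X * fibPoly R (n+1+1) + fibPoly R (n+1)) + fibPoly R m * (Polynomial.X * fibPoly R (n+1) + fibPoly R n)
      ring

lemma fibPoly_monic (R : Type*) [CommRing R] [Nontrivial R] (n : ℕ) :
    (fibPoly R (n + 1)).Monic ∧ (fibPoly R (n + 1)).natDegree = n := by
  induction n using Nat.twoStepInduction with
  | zero => constructor <;> simp [fibPoly, Polynomial.monic_one]
  | one =>
      have : fibPoly R 2 = Polynomial.X := by simp [fibPoly]
      rw [this]; exact ⟨Polynomial.monic_X, Polynomial.natDegree_X⟩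
  | more n ih1 ih2 =>
      obtain ⟨hm1, hd1⟩ := ih2
      obtain ⟨hm0, hd0⟩ := ih1
      have hX : (Polynomial.X * fibPoly R (n + 1 + 1)).Monic := Polynomial.monic_X.mul hm1
      have hdX : (Polynomial.X * fibPoly R (n + 1 + 1)).natDegree = n + 2 := by
        rw [Polynomial.Monic.natDegree_mul Polynomial.monic_X hm1, Polynomial.natDegree_X, hd1]; omega
      have hlt : (fibPoly R (n + 1)).natDegree < (Polynomial.X * fibPoly R (n + 1 + 1)).natDegree := by
        rw [hdX, hd0]; omega
      have hdeg : (fibPoly R (n + 1)).degree < (Polynomial.X * fibPoly R (n + 1 + 1)).degree :=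
        Polynomial.degree_lt_degree hlt
      constructor
      · show (Polynomial.X * fibPoly R (n + 1 + 1) + fibPoly R (n + 1)).Monic
        exact hX.add_of_left hdeg
      · show (Polynomial.X * fibPoly R (n + 1 + 1) + fibPoly R (n + 1)).natDegree = n + 2
        rw [Polynomial.natDegree_add_eq_left_of_degree_lt hdeg, hdX]

theorem fib_poly_square_iff_odd_char_two (F : Type*) [Field F] [Fintype F] [CharP F 2]
    (n : ℕ) (hn : 1 ≤ n) :
    (∃ g : Polynomial F, fibPoly F n = g ^ 2) ↔ Odd n := by
  constructor
  · rintro ⟨g, hg⟩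
    obtain ⟨m, rfl⟩ := Nat.exists_eq_add_of_le' hn
    obtain ⟨hm, hd⟩ := fibPoly_monic F m
    have hne : fibPoly F (m + 1) ≠ 0 := hm.ne_zero
    have hgne : g ≠ 0 := by rintro rfl; simp at hg; exact hne hg
    have : m = 2 * g.natDegree := by
      have := hd.symm.trans (by rw [hg, Polynomial.natDegree_pow])
      omega
    refine ⟨g.natDegree, by omega⟩
  · rintro ⟨k, rfl⟩
    refine ⟨fibPoly F (k + 1) + fibPoly F k, ?_⟩
    have h := fibPoly_add F k k
    rw [show 2 * k + 1 = k + k + 1 by ring, h, CharTwo.add_sq, sq, sq]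
end

section
/- Let q be a power of 2 and k ≥ 1 a natural number. Then in F_q[T], F_{2k}(T) = T·F_k(T)^2 and F_{2k+1}(T) = (F_{k+1}(T) + F_k(T))^2. -/
open Polynomial

theorem fib_poly_double_char_two (F : Type*) [Field F] [Fintype F] [CharP F 2]
    (k : ℕ) (hk : 1 ≤ k) :
    fibPoly F (2 * k) = X * (fibPoly F k) ^ 2 ∧
      fibPoly F (2 * k + 1) = (fibPoly F (k + 1) + fibPoly F k) ^ 2 := by
  have h2 : (2 : Polynomial F) = 0 := CharP.cast_eq_zero (Polynomial F) 2
  induction k with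
  | zero => omega
  | succ n ih =>
    rcases Nat.eq_zero_or_pos n with h | h
    · subst h
      constructor
      · show fibPoly F 2 = _
        simp [fibPoly]
      · show fibPoly F 3 = _
        simp only [fibPoly]
        linear_combination (-X) * h2
    · obtain ⟨ih1, ih2⟩ := ih h
      have e1 : 2 * (n + 1) = 2 * n + 1 + 1 := by ring
      have e2 : 2 * (n + 1) + 1 = 2 * n + 1 + 2 := by ring
      have hd : fibPoly F (2 * n + 1 + 1) = fibPoly F (2 * n + 2) := rfl
      have f1 : fibPoly F (2 * n + 2) = X * fibPoly F (2 * n + 1) + fibPoly F (2 * n) := rfl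
      have f2 : fibPoly F (2 * n + 3) = X * fibPoly F (2 * n + 2) + fibPoly F (2 * n + 1) := rfl
      have f3 : fibPoly F (n + 2) = X * fibPoly F (n + 1) + fibPoly F n := rfl
      constructor
      · rw [e1, hd, f1, ih1, ih2]
        linear_combination (X * fibPoly F (n+1) * fibPoly F n + X * fibPoly F n ^ 2) * h2
      · rw [e2, show (2*n+1+2) = 2*n+3 from rfl, f2, f1, f3, ih1, ih2]
        linear_combination (X^2 * fibPoly F (n+1) * fibPoly F n + X^2 * fibPoly F n ^2 - X * fibPoly F (n+1) * fibPoly F n - X * fibPoly F (n+1)^2) * h2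
end

section
/- Let j > 2 be an odd integer, q a power of 2, and a the multiplicative order of 2 modulo j. Then for n ≥ 1, the Fibonacci polynomial F_n(T) is a perfect j-th power in F_q[T] if and only if n = 2^{ak} for some natural number k. -/
open Polynomial

section

variable {F : Type*} [Field F] [CharP F 2]

lemma fib_monic_deg : ∀ n : ℕ, (fibPoly F (n+1)).Monic ∧ (fibPoly F (n+1)).natDegree = n := by
  have key : ∀ n : ℕ, ((fibPoly F (n+1)).Monic ∧ (fibPoly F (n+1)).natDegree = n) ∧
      ((fibPoly F (n+2)).Monic ∧ (fibPoly F (n+2)).natDegree = n+1) := by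
    intro n
    induction n with
    | zero =>
      refine ⟨⟨monic_one, natDegree_one⟩, ?_⟩
      have : fibPoly F 2 = X := by rw [fibPoly_add_two]; show X * 1 + 0 = X; ring
      rw [this]; exact ⟨monic_X, natDegree_X⟩
    | succ n ih =>
      refine ⟨ih.2, ?_⟩
      rw [fibPoly_add_two]
      have h1 : (X * fibPoly F (n+2)).Monic := (monic_X).mul ih.2.1
      have hd : (X * fibPoly F (n+2)).natDegree = n + 2 := by
        rw [natDegree_mul X_ne_zero ih.2.1.ne_zero, natDegree_X, ih.2.2]
        omega
      have hlt : (fibPoly F (n+1)).degree < (X * fibPoly F (n+2)).degree := by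
        rw [degree_eq_natDegree ih.1.1.ne_zero, degree_eq_natDegree h1.ne_zero, hd, ih.1.2]
        exact_mod_cast by omega
      constructor
      · exact h1.add_of_left hlt
      · rw [natDegree_eq_of_degree_eq (degree_add_eq_left_of_degree_lt hlt), hd]
  exact fun n => (key n).1

lemma fib_ne_zero (n : ℕ) : fibPoly F (n+1) ≠ 0 := (fib_monic_deg n).1.ne_zero

lemma fib_eval_zero_odd : ∀ n : ℕ, eval 0 (fibPoly F (2*n+1)) = 1 := by
  intro n
  induction n with
  | zero => simp [fibPoly]
  | succ n ih =>
    have : 2*(n+1)+1 = (2*n+1) + 2 := by ring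
    rw [this, fibPoly_add_two]
    simpa using ih

lemma fib_catalan : ∀ n : ℕ,
    fibPoly F (n+2) * fibPoly F n + (fibPoly F (n+1))^2 = 1 := by
  have c2 : (2 : Polynomial F) = 0 := by
    have : CharP (Polynomial F) 2 := Polynomial.instCharP 2
    exact CharTwo.two_eq_zero
  intro n
  induction n with
  | zero => simp [fibPoly]
  | succ n ih =>
    rw [fibPoly_add_two F (n+1)]
    rw [fibPoly_add_two F n] at *
    linear_combination ih + (X^2 * fibPoly F (n+1)^2 + X * fibPoly F (n+1) * fibPoly F n) * c2

lemma fib_deriv : ∀ n : ℕ,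
    X * derivative (fibPoly F n) = ((n : Polynomial F) + 1) * fibPoly F n := by
  have c2 : (2 : Polynomial F) = 0 := by
    have : CharP (Polynomial F) 2 := Polynomial.instCharP 2
    exact CharTwo.two_eq_zero
  have key : ∀ n : ℕ, (X * derivative (fibPoly F n) = ((n : Polynomial F) + 1) * fibPoly F n) ∧
      (X * derivative (fibPoly F (n+1)) = ((n : Polynomial F) + 2) * fibPoly F (n+1)) := by
    intro n
    induction n with
    | zero => constructor <;> simp [fibPoly, c2]
    | succ n ih =>
      have h1 := ih.1; have h2 := ih.2
      constructor
      · rw [h2]; push_cast; ring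
      · rw [fibPoly_add_two, derivative_add, derivative_mul, derivative_X]
        push_cast
        linear_combination h1 + X * h2 - fibPoly F n * c2
  exact fun n => (key n).1

end

section

variable {F : Type*} [Field F] [CharP F 2]

private lemma c2' : (2 : Polynomial F) = 0 := by
  have : CharP (Polynomial F) 2 := Polynomial.instCharP 2
  exact CharTwo.two_eq_zero

lemma fib_double : ∀ n : ℕ, (fibPoly F (2*n) = X * (fibPoly F n)^2) ∧
    (fibPoly F (2*n+1) = (fibPoly F (n+1) + fibPoly F n)^2) := by
  have c2 : (2 : Polynomial F) = 0 := c2'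
  intro n
  induction n with
  | zero => constructor <;> simp [fibPoly]
  | succ n ih =>
    have h1 := ih.1; have h2 := ih.2
    have e1 : 2*(n+1) = (2*n) + 2 := by ring
    have e2 : 2*(n+1)+1 = (2*n+1) + 2 := by ring
    constructor
    · rw [e1, fibPoly_add_two, h1, h2]
      linear_combination (X * fibPoly F (n+1) * fibPoly F n + X * (fibPoly F n)^2) * c2
    · rw [e2, fibPoly_add_two, h2]
      have : fibPoly F (2*n+1+1) = fibPoly F (2*(n+1)) := by norm_num [e1]
      rw [this, e1, fibPoly_add_two, h1, h2, fibPoly_add_two]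
      linear_combination (X * fibPoly F (n+1) * fibPoly F n + X * (fibPoly F (n+1))^2
        - fibPoly F (n+1) * fibPoly F n
        - 2*X*fibPoly F (n+1)*fibPoly F n - 2*X*(fibPoly F (n+1))^2
        + X^2*fibPoly F (n+1)*fibPoly F n + X^2*(fibPoly F n)^2
        + fibPoly F (n+1)*fibPoly F n) * c2

lemma fib_pow2_mul : ∀ s m : ℕ, fibPoly F (2^s * m) = X^(2^s - 1) * (fibPoly F m)^(2^s) := by
  intro s
  induction s with
  | zero => intro m; simp
  | succ s ih =>
    intro m
    have e1 : 2^(s+1) * m = 2 * (2^s * m) := by ring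
    rw [e1, (fib_double (F := F) (2^s * m)).1, ih]
    have hs : 1 ≤ 2^s := Nat.one_le_two_pow
    have e2 : (2^s - 1) * 2 + 1 = 2^(s+1) - 1 := by
      have : 2^(s+1) = 2 * 2^s := by ring
      omega
    have e3 : 2^s * 2 = 2^(s+1) := by ring
    rw [mul_pow, ← pow_mul, ← pow_mul, e3, ← e2, pow_add, pow_one]
    ring

lemma fib_G_sep (k : ℕ) : (fibPoly F (k+1) + fibPoly F k).Separable := by
  have c2 : (2 : Polynomial F) = 0 := c2'
  match k with
  | 0 =>
    have : fibPoly F 1 + fibPoly F 0 = 1 := by simp [fibPoly]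
    rw [this]; exact separable_one
  | (n+1) =>
    have cat := fib_catalan (F := F) n
    rcases Nat.even_or_odd (n+1) with he | ho
    · -- n+1 even
      obtain ⟨r, hr⟩ := he
      have hknat : ((n+1 : ℕ) : Polynomial F) = 0 := by
        rw [hr]; push_cast; linear_combination (r : Polynomial F) * c2
      have hD : derivative (fibPoly F (n+2)) = 0 := by
        have h := fib_deriv (F := F) (n+2)
        have h0 : ((n+2 : ℕ) : Polynomial F) + 1 = 0 := by
          have : ((n+2 : ℕ) : Polynomial F) = ((n+1 : ℕ) : Polynomial F) + 1 := by push_cast; ring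
          rw [this, hknat]; linear_combination c2
        rw [h0, zero_mul] at h
        exact (mul_eq_zero.mp h).resolve_left X_ne_zero
      have hd : X * derivative (fibPoly F (n+1)) = fibPoly F (n+1) := by
        have h := fib_deriv (F := F) (n+1)
        rwa [hknat, zero_add, one_mul] at h
      refine ⟨fibPoly F n, X * fibPoly F n + X * fibPoly F (n+1), ?_⟩
      rw [derivative_add, hD, zero_add]
      linear_combination cat + (fibPoly F n + fibPoly F (n+1)) * hd
        + (fibPoly F n * fibPoly F (n+1)) * c2
    · -- n+1 odd
      obtain ⟨r, hr⟩ := ho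
      have hknat : ((n+1 : ℕ) : Polynomial F) = 1 := by
        rw [hr]; push_cast; linear_combination (r : Polynomial F) * c2
      have hd : derivative (fibPoly F (n+1)) = 0 := by
        have h := fib_deriv (F := F) (n+1)
        have h0 : ((n+1 : ℕ) : Polynomial F) + 1 = 0 := by rw [hknat]; linear_combination c2
        rw [h0, zero_mul] at h
        exact (mul_eq_zero.mp h).resolve_left X_ne_zero
      have hD : X * derivative (fibPoly F (n+2)) = fibPoly F (n+2) := by
        have h := fib_deriv (F := F) (n+2)
        have h0 : ((n+2 : ℕ) : Polynomial F) + 1 = 1 := by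
          have : ((n+2 : ℕ) : Polynomial F) = ((n+1 : ℕ) : Polynomial F) + 1 := by push_cast; ring
          rw [this, hknat]; linear_combination c2
        rwa [h0, one_mul] at h
      refine ⟨fibPoly F (n+1), X * fibPoly F n + X * fibPoly F (n+1), ?_⟩
      rw [derivative_add, hd, add_zero]
      linear_combination cat + (fibPoly F n + fibPoly F (n+1)) * hD
        + (fibPoly F (n+1) * fibPoly F (n+2)) * c2

end

theorem fib_poly_jth_power_iff_char_two (j : ℕ) (hj : 2 < j) (hjodd : Odd j)
    (F : Type*) [Field F] [Fintype F] [CharP F 2]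
    (a : ℕ) (ha : a = orderOf (2 : ZMod j)) (n : ℕ) (hn : 1 ≤ n) :
    (∃ g : Polynomial F, fibPoly F n = g ^ j) ↔ ∃ k : ℕ, n = 2 ^ (a * k) := by
  subst ha
  have hn0 : n ≠ 0 := by omega
  constructor
  · rintro ⟨g, hg⟩
    set s := n.factorization 2 with hs
    set m := n / 2 ^ s with hm
    have hnsm : 2 ^ s * m = n := Nat.ordProj_mul_ordCompl_eq_self n 2
    have hmodd : ¬ 2 ∣ m := Nat.not_dvd_ordCompl Nat.prime_two hn0
    have hmpos : 0 < m := Nat.ordCompl_pos 2 hn0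
    rcases eq_or_lt_of_le (Nat.succ_le_of_lt hmpos) with h1 | h1
    · -- m = 1, n = 2^s
      have hm1 : m = 1 := h1.symm
      have hfn : fibPoly F n = X ^ (2^s - 1) := by
        rw [← hnsm, hm1, fib_pow2_mul]
        have : fibPoly F 1 = 1 := rfl
        rw [this]; ring
      have hdeg : 2^s - 1 = j * g.natDegree := by
        have h2 := congrArg natDegree hg
        rwa [hfn, natDegree_X_pow, natDegree_pow] at h2
      have hmod : (2 : ZMod j) ^ s = 1 := by
        have h1le : 1 ≤ (2:ℕ) ^ s := Nat.one_le_two_pow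
        have hmodeq : (2:ℕ)^s ≡ 1 [MOD j] :=
          ((Nat.modEq_iff_dvd' h1le).mpr ⟨g.natDegree, by omega⟩).symm
        calc (2:ZMod j)^s = (((2:ℕ)^s : ℕ) : ZMod j) := by push_cast; ring
          _ = ((1:ℕ) : ZMod j) := (ZMod.natCast_eq_natCast_iff _ _ _).mpr hmodeq
          _ = 1 := Nat.cast_one
      obtain ⟨k, hk⟩ := orderOf_dvd_iff_pow_eq_one.mpr hmod
      exact ⟨k, by rw [← hnsm, hm1, mul_one, hk]⟩
    · -- m > 1 : contradiction
      exfalso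
      obtain ⟨t, ht⟩ : Odd m := Nat.odd_iff.mpr (Nat.two_dvd_ne_zero.mp hmodd)
      have htpos : 1 ≤ t := by omega
      set G : Polynomial F := fibPoly F (t+1) + fibPoly F t with hGdef
      have hG2 : fibPoly F m = G ^ 2 := by rw [ht]; exact (fib_double t).2
      have hFm_ne : fibPoly F m ≠ 0 := by rw [ht]; exact fib_ne_zero (2*t)
      have hGne : G ≠ 0 := by
        intro h; apply hFm_ne; rw [hG2, h]; ring
      have hdegG : G.natDegree = t := by
        have h2 : (fibPoly F m).natDegree = 2*t := by rw [ht]; exact (fib_monic_deg (2*t)).2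
        rw [hG2, natDegree_pow] at h2; omega
      have hGnotunit : ¬ IsUnit G := by
        intro h; have := natDegree_eq_zero_of_isUnit h; omega
      obtain ⟨p, hp_irr, hpG⟩ := WfDvdMonoid.exists_irreducible_factor hGnotunit hGne
      have hp : Prime p := UniqueFactorizationMonoid.irreducible_iff_prime.mp hp_irr
      have hevalG : eval 0 G ≠ 0 := by
        have h2 : eval 0 (fibPoly F m) = 1 := by rw [ht]; exact fib_eval_zero_odd t
        rw [hG2, eval_pow] at h2
        intro h; rw [h] at h2; simp at h2
      have hpX : ¬ p ∣ X := by
        intro hdvd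
        have hassoc := hp_irr.associated_of_dvd irreducible_X hdvd
        have hXG : X ∣ G := hassoc.symm.dvd.trans hpG
        rw [X_dvd_iff] at hXG
        exact hevalG (by rwa [← coeff_zero_eq_eval_zero])
      have hemulG : emultiplicity p G = 1 := by
        rw [show ((1:ℕ∞)) = ((1:ℕ) : ℕ∞) by norm_cast, emultiplicity_eq_coe]
        refine ⟨by simpa using hpG, ?_⟩
        intro hsq
        exact hp.not_unit ((fib_G_sep t).squarefree p (by rwa [← sq]))
      have hfn : fibPoly F n = X^(2^s - 1) * G^(2^(s+1)) := by
        rw [← hnsm, fib_pow2_mul, hG2, ← pow_mul]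
        congr 1
        rw [pow_succ]; ring
      have hemul : emultiplicity p (fibPoly F n) = ((2^(s+1) : ℕ) : ℕ∞) := by
        rw [hfn, emultiplicity_mul hp, emultiplicity_pow hp, emultiplicity_pow hp, hemulG]
        have hX0 : emultiplicity p X = 0 := emultiplicity_eq_zero.mpr hpX
        rw [hX0]
        simp
      have hg_ne : g ≠ 0 := by
        intro h; apply hFm_ne
        have : fibPoly F n = 0 := by rw [hg, h, zero_pow (by omega)]
        rw [← hnsm, fib_pow2_mul] at this
        rcases mul_eq_zero.mp this with h' | h'
        · exact absurd h' (pow_ne_zero _ X_ne_zero)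
        · exact pow_eq_zero_iff (by positivity) |>.mp h'
      have hfin : FiniteMultiplicity p g :=
        FiniteMultiplicity.of_not_isUnit hp.not_unit hg_ne
      have heq : ((j * multiplicity p g : ℕ) : ℕ∞) = ((2^(s+1) : ℕ) : ℕ∞) := by
        rw [← hemul, hg, emultiplicity_pow hp, hfin.emultiplicity_eq_multiplicity]
        push_cast; ring
      have hjd : j ∣ 2^(s+1) := ⟨multiplicity p g, (Nat.cast_inj.mp heq).symm⟩
      obtain ⟨i, hi, rfl⟩ := (Nat.dvd_prime_pow Nat.prime_two).mp hjd
      rcases i with _ | i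
      · simp at hj
      · exact (Nat.two_dvd_ne_zero.mpr (Nat.odd_iff.mp hjodd))
          (dvd_pow_self 2 (Nat.succ_ne_zero i))
  · rintro ⟨k, rfl⟩
    have hpow : (2 : ZMod j)^(orderOf (2 : ZMod j) * k) = 1 :=
      orderOf_dvd_iff_pow_eq_one.mp ⟨k, rfl⟩
    have hjd : j ∣ 2^(orderOf (2 : ZMod j) * k) - 1 := by
      have h2 : (((2:ℕ)^(orderOf (2 : ZMod j) * k) : ℕ) : ZMod j) = ((1:ℕ) : ZMod j) := by
        push_cast; exact_mod_cast hpow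
      exact (Nat.modEq_iff_dvd' Nat.one_le_two_pow).mp
        ((ZMod.natCast_eq_natCast_iff _ _ _).mp h2).symm
    refine ⟨X ^ ((2^(orderOf (2 : ZMod j) * k) - 1)/j), ?_⟩
    have hfn : fibPoly F (2^(orderOf (2 : ZMod j) * k)) = X^(2^(orderOf (2 : ZMod j) * k) - 1) := by
      have h := fib_pow2_mul (F := F) (orderOf (2 : ZMod j) * k) 1
      rw [mul_one] at h
      rw [h]
      have : fibPoly F 1 = 1 := rfl
      rw [this]; ring
    rw [hfn, ← pow_mul, Nat.div_mul_cancel hjd]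
end
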